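/- (Fan-repair extension lemma, Section 2.1.) Let G be a finite simple graph with maximum degree at most Δ, let φ be a proper partial edge coloring of G with color set {1, …, Δ+1}, and let e = uv be an uncolored edge. Then there exists a proper partial edge coloring φ' of G with the same color set {1, …, Δ+1} whose set of colored edges is exactly the set of colored edges of φ together with e. In other words, any proper partial (Δ+1)-edge-coloring can be modified, by recoloring some already-colored edges, so that one additional prescribed edge becomes colored while all previously colored edges remain colored. -/

import Mathlib

/-- A proper partial edge coloring of `G` with color set `C`: colors are assigned
(optionally) to edges of `G`, take values in `C`, and distinct colored edges
sharing an endpoint receive different colors. -/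
def IsProperPartialEC {V : Type*} (G : SimpleGraph V) (C : Set ℕ)
    (φ : Sym2 V → Option ℕ) : Prop :=
  (∀ e : Sym2 V, φ e ≠ none → e ∈ G.edgeSet) ∧
  (∀ (e : Sym2 V) (c : ℕ), φ e = some c → c ∈ C) ∧
  (∀ e₁ e₂ : Sym2 V, e₁ ≠ e₂ → (∃ x : V, x ∈ e₁ ∧ x ∈ e₂) →
    ∀ c : ℕ, φ e₁ = some c → φ e₂ ≠ some c)

namespace VizingAux

set_option linter.unusedSectionVars false

/-! ### Color transposition -/

def tau (α c d : ℕ) : ℕ := if d = α then c else if d = c then α else d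

lemma tau_invol (α c d : ℕ) : tau α c (tau α c d) = d := by
  unfold tau; split_ifs <;> simp_all

lemma tau_inj (α c : ℕ) : Function.Injective (tau α c) := fun a b h => by
  have h2 := congrArg (tau α c) h; rwa [tau_invol, tau_invol] at h2

lemma tau_eq_c {α c d : ℕ} (h : tau α c d = c) : d = α := by
  unfold tau at h; split_ifs at h <;> simp_all

lemma tau_mem {C : Set ℕ} {α c d : ℕ} (hα : α ∈ C) (hc : c ∈ C) (hd : d ∈ C) :
    tau α c d ∈ C := by
  unfold tau; split_ifs <;> assumption

variable {V : Type*} [DecidableEq V]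

/-! ### Basic properness facts -/

lemma anchored {G : SimpleGraph V} {C : Set ℕ} {φ : Sym2 V → Option ℕ}
    (hφ : IsProperPartialEC G C φ) {x y y' : V} (hyy : y ≠ y') {c : ℕ}
    (h1 : φ s(x, y) = some c) : φ s(x, y') ≠ some c :=
  hφ.2.2 s(x, y) s(x, y') (fun h => hyy (Sym2.congr_right.mp h))
    ⟨x, Sym2.mem_mk_left x y, Sym2.mem_mk_left x y'⟩ c h1

lemma proper_of {G : SimpleGraph V} {C : Set ℕ} {φ : Sym2 V → Option ℕ}
    (h1 : ∀ e, φ e ≠ none → e ∈ G.edgeSet)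
    (h2 : ∀ e c, φ e = some c → c ∈ C)
    (h3 : ∀ x y y', y ≠ y' → ∀ c, φ s(x, y) = some c → φ s(x, y') ≠ some c) :
    IsProperPartialEC G C φ := by
  refine ⟨h1, h2, ?_⟩
  rintro e1 e2 hne ⟨x, hx1, hx2⟩ c hc
  obtain ⟨y1, rfl⟩ := Sym2.mem_iff_exists.mp hx1
  obtain ⟨y2, rfl⟩ := Sym2.mem_iff_exists.mp hx2
  exact h3 x y1 y2 (fun h => hne (by rw [h])) c hc

lemma missing_exists [Fintype V] {G : SimpleGraph V} [DecidableRel G.Adj] {Δ : ℕ}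
    {φ : Sym2 V → Option ℕ}
    (hφ : IsProperPartialEC G (Set.Icc 1 (Δ + 1)) φ) (x : V) (hdeg : G.degree x ≤ Δ) :
    ∃ c, c ∈ Set.Icc 1 (Δ + 1) ∧ ∀ y, φ s(x, y) ≠ some c := by
  classical
  by_contra hcon
  push_neg at hcon
  have hex : ∀ c ∈ Finset.Icc 1 (Δ + 1), ∃ y, φ s(x, y) = some c := by
    intro c hc
    exact hcon c (by simpa using hc)
  choose f hf using hex
  have hle : (Finset.Icc 1 (Δ + 1)).card ≤ G.degree x := by
    rw [← SimpleGraph.card_neighborFinset_eq_degree]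
    apply Finset.card_le_card_of_injOn (fun c => if h : c ∈ Finset.Icc 1 (Δ + 1) then f c h else x)
    · intro c hc
      rw [Finset.mem_coe] at hc; simp only [hc, dif_pos]
      rw [Finset.mem_coe, SimpleGraph.mem_neighborFinset]
      exact (SimpleGraph.mem_edgeSet G).mp (hφ.1 _ (by rw [hf c hc]; simp))
    · intro a ha b hb hab
      simp only [Finset.mem_coe] at ha hb
      simp only [ha, hb, dif_pos] at hab
      have h1 := hf a ha
      have h2 := hf b hb
      rw [hab] at h1
      rw [h1] at h2
      exact Option.some_inj.mp h2
  rw [Nat.card_Icc] at hle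
  omega

lemma uncolor_proper {G : SimpleGraph V} {C : Set ℕ} {φ : Sym2 V → Option ℕ}
    (hφ : IsProperPartialEC G C φ) (e0 : Sym2 V) :
    IsProperPartialEC G C (Function.update φ e0 none) := by
  have key : ∀ e, Function.update φ e0 none e = none ∨ Function.update φ e0 none e = φ e := by
    intro e
    by_cases h : e = e0
    · subst h; left; simp
    · right; rw [Function.update_of_ne h]
  refine proper_of (fun e he => ?_) (fun e c hc => ?_) (fun x y y' hyy c hc => ?_)
  · rcases key e with h | h
    · exact absurd h he
    · exact hφ.1 e (h ▸ he)
  · rcases key e with h | h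
    · rw [h] at hc; exact absurd hc (by simp)
    · exact hφ.2.1 e c (h ▸ hc)
  · rcases key s(x, y) with h | h
    · rw [h] at hc; exact absurd hc (by simp)
    · rw [h] at hc
      rcases key s(x, y') with h' | h'
      · rw [h']; simp
      · rw [h']; exact anchored hφ hyy hc

lemma extend_one {G : SimpleGraph V} {C : Set ℕ} {φ : Sym2 V → Option ℕ}
    (hφ : IsProperPartialEC G C φ) {a b : V} (hab : s(a, b) ∈ G.edgeSet)
    (hnone : φ s(a, b) = none) {c : ℕ} (hc : c ∈ C)
    (ha : ∀ y, φ s(a, y) ≠ some c) (hb : ∀ y, φ s(b, y) ≠ some c) :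
    IsProperPartialEC G C (Function.update φ s(a, b) (some c)) ∧
    {e : Sym2 V | Function.update φ s(a, b) (some c) e ≠ none}
      = insert s(a, b) {e : Sym2 V | φ e ≠ none} := by
  constructor
  · refine proper_of (fun e he => ?_) (fun e d hd => ?_) (fun x y y' hyy d hd => ?_)
    · by_cases h : e = s(a, b)
      · exact h ▸ hab
      · exact hφ.1 e (by rwa [Function.update_of_ne h] at he)
    · by_cases h : e = s(a, b)
      · subst h; simp at hd; exact hd ▸ hc
      · exact hφ.2.1 e d (by rwa [Function.update_of_ne h] at hd)
    · by_cases h : s(x, y) = s(a, b)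
      · rw [h] at hd; simp at hd; subst hd
        have hx : x = a ∨ x = b := by
          rcases Sym2.eq_iff.mp h with ⟨h1, _⟩ | ⟨h1, _⟩
          · exact Or.inl h1
          · exact Or.inr h1
        have hne2 : s(x, y') ≠ s(a, b) := fun heq =>
          hyy (Sym2.congr_right.mp (h.trans heq.symm))
        rw [Function.update_of_ne hne2]
        rcases hx with rfl | rfl
        · exact ha y'
        · exact hb y'
      · rw [Function.update_of_ne h] at hd
        by_cases h' : s(x, y') = s(a, b)
        · rw [h']; simp only [Function.update_self]
          intro heq
          have hdc : d = c := by injection heq with h2; exact h2.symm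
          subst hdc
          have hx : x = a ∨ x = b := by
            rcases Sym2.eq_iff.mp h' with ⟨h1, _⟩ | ⟨h1, _⟩
            · exact Or.inl h1
            · exact Or.inr h1
          rcases hx with rfl | rfl
          · exact ha y hd
          · exact hb y hd
        · rw [Function.update_of_ne h']
          exact anchored hφ hyy hd
  · ext e
    by_cases h : e = s(a, b) <;> simp [h]

/-! ### The Kempe-chain swap -/

open scoped Classical in
noncomputable def swapOn (φ : Sym2 V → Option ℕ) (α c : ℕ) (S : Set V) :
    Sym2 V → Option ℕ :=
  fun e => if ∃ x ∈ S, x ∈ e then Option.map (tau α c) (φ e) else φ e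

lemma swapOn_none_iff (φ : Sym2 V → Option ℕ) (α c : ℕ) (S : Set V) (e : Sym2 V) :
    swapOn φ α c S e = none ↔ φ e = none := by
  unfold swapOn; split_ifs <;> simp

lemma swapOn_mem {φ : Sym2 V → Option ℕ} {α c : ℕ} {S : Set V} {x : V} (hx : x ∈ S) (y : V) :
    swapOn φ α c S s(x, y) = Option.map (tau α c) (φ s(x, y)) := by
  unfold swapOn; rw [if_pos ⟨x, hx, Sym2.mem_mk_left x y⟩]

lemma swapOn_not_mem {φ : Sym2 V → Option ℕ} {α c : ℕ} {S : Set V}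
    (hS : ∀ x ∈ S, ∀ y, (φ s(x, y) = some α ∨ φ s(x, y) = some c) → y ∈ S)
    {x : V} (hx : x ∉ S) (y : V) :
    swapOn φ α c S s(x, y) = φ s(x, y) := by
  unfold swapOn
  split_ifs with h
  · obtain ⟨w, hw, hwe⟩ := h
    rcases Sym2.mem_iff.mp hwe with rfl | rfl
    · exact absurd hw hx
    · cases hαc : φ s(x, w) with
      | none => simp
      | some d =>
        by_cases hd : d = α ∨ d = c
        · exfalso
          apply hx
          apply hS w hw x
          rw [Sym2.eq_swap]
          rcases hd with rfl | rfl
          · exact Or.inl hαc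
          · exact Or.inr hαc
        · push_neg at hd
          simp only [Option.map_some]
          unfold tau
          rw [if_neg hd.1, if_neg hd.2]
  · rfl

lemma swap_proper {G : SimpleGraph V} {C : Set ℕ} {φ : Sym2 V → Option ℕ}
    (hφ : IsProperPartialEC G C φ) {α c : ℕ} (hα : α ∈ C) (hc : c ∈ C)
    {S : Set V} (hS : ∀ x ∈ S, ∀ y, (φ s(x, y) = some α ∨ φ s(x, y) = some c) → y ∈ S) :
    IsProperPartialEC G C (swapOn φ α c S) ∧
    {e : Sym2 V | swapOn φ α c S e ≠ none} = {e : Sym2 V | φ e ≠ none} := by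
  constructor
  · refine proper_of (fun e he => ?_) (fun e d hd => ?_) (fun x y y' hyy d hd => ?_)
    · apply hφ.1
      intro h
      exact he ((swapOn_none_iff φ α c S e).mpr h)
    · unfold swapOn at hd
      split_ifs at hd with h
      · cases he : φ e with
        | none => rw [he] at hd; simp at hd
        | some d' =>
          rw [he] at hd
          simp only [Option.map_some] at hd
          have : d = tau α c d' := by injection hd with h2; exact h2.symm
          rw [this]
          exact tau_mem hα hc (hφ.2.1 e d' he)
      · exact hφ.2.1 e d hd
    · by_cases hx : x ∈ S
      · rw [swapOn_mem hx] at hd ⊢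
        cases he : φ s(x, y) with
        | none => rw [he] at hd; simp at hd
        | some d1 =>
          rw [he] at hd
          simp only [Option.map_some] at hd
          intro hd'
          cases he' : φ s(x, y') with
          | none => rw [he'] at hd'; simp at hd'
          | some d2 =>
            rw [he'] at hd'
            simp only [Option.map_some] at hd'
            have : d1 = d2 := by
              apply tau_inj α c
              injection hd with h2
              injection hd' with h3
              rw [h2, h3]
            subst this
            exact anchored hφ hyy he he'
      · rw [swapOn_not_mem hS hx] at hd ⊢
        exact anchored hφ hyy hd
  · ext e
    simp only [Set.mem_setOf_eq, ne_eq]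
    rw [not_iff_not]
    exact swapOn_none_iff φ α c S e

/-! ### Paths in graphs of maximum degree two -/

lemma walk_prefix [Fintype V] {H : SimpleGraph V} [DecidableRel H.Adj]
    (hdeg : ∀ x, H.degree x ≤ 2) :
    ∀ {a v : V} (p : H.Walk a v), p.IsPath → ∀ {w : V} (q : H.Walk a w), q.IsPath →
      ∀ z, H.Adj z a → z ∉ p.support → z ∉ q.support →
      (∀ x ∈ p.support, x ∈ q.support) ∨ (∀ x ∈ q.support, x ∈ p.support) := by
  intro a v p
  induction p with
  | nil =>
    intro _ w q _ _ _ _ _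
    left
    intro x hx
    simp only [SimpleGraph.Walk.support_nil, List.mem_singleton] at hx
    subst hx
    exact q.start_mem_support
  | @cons u₁ v₁ v h p' ih =>
    intro hp w q hq z hz hzp hzq
    cases q with
    | nil =>
      right
      intro x hx
      simp only [SimpleGraph.Walk.support_nil, List.mem_singleton] at hx
      subst hx
      exact (SimpleGraph.Walk.cons h p').start_mem_support
    | @cons _ b₂ _ h' q' =>
      have hzv : z ≠ v₁ := by
        intro hzz
        apply hzp
        rw [SimpleGraph.Walk.support_cons, hzz]
        exact List.mem_cons_of_mem _ p'.start_mem_support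
      have hzb : z ≠ b₂ := by
        intro hzz
        apply hzq
        rw [SimpleGraph.Walk.support_cons, hzz]
        exact List.mem_cons_of_mem _ q'.start_mem_support
      have hvb : v₁ = b₂ := by
        by_contra hvb
        have hsub : ({z, v₁, b₂} : Finset V) ⊆ H.neighborFinset u₁ := by
          intro t ht
          simp only [Finset.mem_insert, Finset.mem_singleton] at ht
          rw [SimpleGraph.mem_neighborFinset]
          rcases ht with rfl | rfl | rfl
          · exact hz.symm
          · exact h
          · exact h'
        have hcard : ({z, v₁, b₂} : Finset V).card = 3 := by
          rw [Finset.card_insert_of_notMem (by simp [hzv, hzb]),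
            Finset.card_insert_of_notMem (by simp [hvb]), Finset.card_singleton]
        have := le_trans (Finset.card_le_card hsub) (hdeg u₁)
        omega
      subst hvb
      rw [SimpleGraph.Walk.cons_isPath_iff] at hp hq
      rcases ih hp.1 q' hq.1 u₁ h hp.2 hq.2 with hsub | hsub
      · left
        intro x hx
        rw [SimpleGraph.Walk.support_cons] at hx ⊢
        rcases List.mem_cons.mp hx with rfl | hx
        · exact List.mem_cons_self
        · exact List.mem_cons_of_mem _ (hsub x hx)
      · right
        intro x hx
        rw [SimpleGraph.Walk.support_cons] at hx ⊢
        rcases List.mem_cons.mp hx with rfl | hx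
        · exact List.mem_cons_self
        · exact List.mem_cons_of_mem _ (hsub x hx)

lemma interior_two [Fintype V] {H : SimpleGraph V} [DecidableRel H.Adj] :
    ∀ {u b : V} (q : H.Walk u b), q.IsPath → ∀ a, a ∈ q.support → a ≠ u → a ≠ b →
      2 ≤ H.degree a := by
  intro u b q
  induction q with
  | nil =>
    intro _ a ha hau _
    simp only [SimpleGraph.Walk.support_nil, List.mem_singleton] at ha
    exact absurd ha hau
  | @cons u₁ u₂ _ h q' ih =>
    intro hq a ha hau hab
    rw [SimpleGraph.Walk.support_cons] at ha
    rcases List.mem_cons.mp ha with rfl | ha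
    · exact absurd rfl hau
    · rw [SimpleGraph.Walk.cons_isPath_iff] at hq
      by_cases hau2 : a = u₂
      · subst hau2
        cases q' with
        | nil => exact absurd rfl hab
        | @cons _ u₃ _ h₂ q'' =>
          have hu₃ : u₃ ∈ (SimpleGraph.Walk.cons h₂ q'').support := by
            rw [SimpleGraph.Walk.support_cons]
            exact List.mem_cons_of_mem _ q''.start_mem_support
          have hne : u₁ ≠ u₃ := fun hh => hq.2 (hh ▸ hu₃)
          have hsub : ({u₁, u₃} : Finset V) ⊆ H.neighborFinset a := by
            intro t ht
            simp only [Finset.mem_insert, Finset.mem_singleton] at ht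
            rw [SimpleGraph.mem_neighborFinset]
            rcases ht with rfl | rfl
            · exact h.symm
            · exact h₂
          calc 2 = ({u₁, u₃} : Finset V).card := by
                rw [Finset.card_insert_of_notMem (by simp [hne]), Finset.card_singleton]
            _ ≤ (H.neighborFinset a).card := Finset.card_le_card hsub
            _ = H.degree a := H.card_neighborFinset_eq_degree a
      · exact ih hq.1 a ha hau2 hab

/-! ### Kempe chains -/

def kempeRel (φ : Sym2 V → Option ℕ) (α c : ℕ) (x y : V) : Prop :=
  φ s(x, y) = some α ∨ φ s(x, y) = some c

lemma kempeRel_symm (φ : Sym2 V → Option ℕ) (α c : ℕ) :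
    Symmetric (kempeRel φ α c) := by
  intro x y h
  unfold kempeRel at *
  rwa [Sym2.eq_swap]

lemma kempeRel_ne {G : SimpleGraph V} {C : Set ℕ} {φ : Sym2 V → Option ℕ}
    (hφ : IsProperPartialEC G C φ) {α c : ℕ} {x y : V} (h : kempeRel φ α c x y) :
    x ≠ y := by
  rintro rfl
  have : s(x, x) ∈ G.edgeSet := by
    apply hφ.1
    rcases h with h | h <;> simp [h]
  exact G.irrefl ((SimpleGraph.mem_edgeSet G).mp this)

def kempeGraph {G : SimpleGraph V} {C : Set ℕ} {φ : Sym2 V → Option ℕ}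
    (hφ : IsProperPartialEC G C φ) (α c : ℕ) : SimpleGraph V where
  Adj x y := kempeRel φ α c x y
  symm := ⟨fun x y h => kempeRel_symm φ α c h⟩
  loopless := ⟨fun x h => (kempeRel_ne hφ h) rfl⟩

lemma three_ends [Fintype V] {G : SimpleGraph V} {C : Set ℕ} {φ : Sym2 V → Option ℕ}
    (hφ : IsProperPartialEC G C φ) {α c : ℕ}
    {u a b : V} (hua : u ≠ a) (hub : u ≠ b) (hab2 : a ≠ b)
    (hu : ∀ y, φ s(u, y) ≠ some α)
    (ha : ∀ y, φ s(a, y) ≠ some c)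
    (hb : ∀ y, φ s(b, y) ≠ some c)
    (hra : Relation.ReflTransGen (kempeRel φ α c) u a)
    (hrb : Relation.ReflTransGen (kempeRel φ α c) u b) : False := by
  classical
  set H : SimpleGraph V := kempeGraph hφ α c with hH
  haveI : DecidableRel H.Adj := Classical.decRel _
  have hadj : ∀ x y, H.Adj x y ↔ kempeRel φ α c x y := fun x y => Iff.rfl
  have deg2 : ∀ x, H.degree x ≤ 2 := by
    intro x
    rw [← SimpleGraph.card_neighborFinset_eq_degree]
    have hb2 : (H.neighborFinset x).card ≤ ({some α, some c} : Finset (Option ℕ)).card := by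
      apply Finset.card_le_card_of_injOn (fun y => φ s(x, y))
      · intro y hy
        rw [Finset.mem_coe, SimpleGraph.mem_neighborFinset] at hy
        rcases (hadj x y).mp hy with h | h <;> simp [h]
      · intro y hy y' hy' hf
        have hf' : φ s(x, y) = φ s(x, y') := hf
        by_contra hne
        simp only [Finset.mem_coe, SimpleGraph.mem_neighborFinset] at hy hy'
        rcases (hadj x y).mp hy with h | h
        · exact anchored hφ hne h (by rw [← hf']; exact h)
        · exact anchored hφ hne h (by rw [← hf']; exact h)
    calc (H.neighborFinset x).card ≤ _ := hb2
      _ ≤ 2 := Finset.card_insert_le _ _ |>.trans (by simp)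
  have unique_nbr : ∀ (x : V) (d : ℕ), (∀ y, H.Adj x y → φ s(x, y) = some d) →
      ∀ y y', H.Adj x y → H.Adj x y' → y = y' := by
    intro x d hxd y y' hy hy'
    by_contra hne
    exact anchored hφ hne (hxd y hy) (hxd y' hy')
  have deg_le_one : ∀ (x : V) (d : ℕ), (∀ y, H.Adj x y → φ s(x, y) = some d) →
      H.degree x ≤ 1 := by
    intro x d hxd
    rw [← SimpleGraph.card_neighborFinset_eq_degree]
    rw [Finset.card_le_one]
    intro y hy y' hy'
    rw [SimpleGraph.mem_neighborFinset] at hy hy'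
    exact unique_nbr x d hxd y y' hy hy'
  have hu' : ∀ y, H.Adj u y → φ s(u, y) = some c := by
    intro y hy
    rcases (hadj u y).mp hy with h | h
    · exact absurd h (hu y)
    · exact h
  have ha' : ∀ y, H.Adj a y → φ s(a, y) = some α := by
    intro y hy
    rcases (hadj a y).mp hy with h | h
    · exact h
    · exact absurd h (ha y)
  have hb' : ∀ y, H.Adj b y → φ s(b, y) = some α := by
    intro y hy
    rcases (hadj b y).mp hy with h | h
    · exact h
    · exact absurd h (hb y)
  have hmono : ∀ x y, kempeRel φ α c x y → H.Adj x y := fun x y h => h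
  have hra' : H.Reachable u a := by
    rw [SimpleGraph.reachable_iff_reflTransGen]
    exact Relation.ReflTransGen.mono hmono _ _ hra
  have hrb' : H.Reachable u b := by
    rw [SimpleGraph.reachable_iff_reflTransGen]
    exact Relation.ReflTransGen.mono hmono _ _ hrb
  refine hra'.elim fun w1 => hrb'.elim fun w2 => ?_
  obtain ⟨p, hp⟩ := w1.toPath
  obtain ⟨q, hq⟩ := w2.toPath
  clear w1 w2
  cases p with
  | nil => exact hua rfl
  | @cons _ y₁ _ h1 p' =>
    cases q with
    | nil => exact hub rfl
    | @cons _ y₂ _ h2 q' =>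
      have hy12 : y₁ = y₂ := unique_nbr u c hu' y₁ y₂ h1 h2
      subst hy12
      rw [SimpleGraph.Walk.cons_isPath_iff] at hp hq
      rcases walk_prefix deg2 p' hp.1 q' hq.1 u h1 hp.2 hq.2 with hsub | hsub
      · have haq : a ∈ (SimpleGraph.Walk.cons h2 q').support := by
          rw [SimpleGraph.Walk.support_cons]
          exact List.mem_cons_of_mem _ (hsub a p'.end_mem_support)
        have h2d : 2 ≤ H.degree a :=
          interior_two (SimpleGraph.Walk.cons h2 q')
            ((SimpleGraph.Walk.cons_isPath_iff h2 q').mpr hq) a haq (Ne.symm hua) hab2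
        have h1d : H.degree a ≤ 1 := deg_le_one a α ha'
        omega
      · have hbp : b ∈ (SimpleGraph.Walk.cons h1 p').support := by
          rw [SimpleGraph.Walk.support_cons]
          exact List.mem_cons_of_mem _ (hsub b q'.end_mem_support)
        have h2d : 2 ≤ H.degree b :=
          interior_two (SimpleGraph.Walk.cons h1 p')
            ((SimpleGraph.Walk.cons_isPath_iff h1 p').mpr hp) b hbp (Ne.symm hub) (Ne.symm hab2)
        have h1d : H.degree b ≤ 1 := deg_le_one b α hb'
        omega

/-! ### The fan and fan rotation -/

structure Fan (G : SimpleGraph V) (C : Set ℕ) (φ : Sym2 V → Option ℕ) (u : V) (n : ℕ) where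
  v : ℕ → V
  β : ℕ → ℕ
  hadj : ∀ i, i ≤ n → G.Adj u (v i)
  hvinj : ∀ i, i ≤ n → ∀ j, j ≤ n → v i = v j → i = j
  hnone0 : φ s(u, v 0) = none
  hedge : ∀ i, i < n → φ s(u, v (i+1)) = some (β i)
  hmiss : ∀ i, i < n → ∀ y, φ s(v i, y) ≠ some (β i)
  hβC : ∀ i, i < n → β i ∈ C
  hβinj : ∀ i, i < n → ∀ j, j < n → β i = β j → i = j

namespace Fan

variable {G : SimpleGraph V} {C : Set ℕ} {φ : Sym2 V → Option ℕ} {u : V} {n : ℕ}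

lemma une (F : Fan G C φ u n) {i : ℕ} (hi : i ≤ n) : u ≠ F.v i :=
  (F.hadj i hi).ne

lemma edge_ne (F : Fan G C φ u n) {i j : ℕ} (hi : i ≤ n) (hj : j ≤ n) (hij : i ≠ j) :
    s(u, F.v i) ≠ s(u, F.v j) := fun h => hij (F.hvinj i hi j hj (Sym2.congr_right.mp h))

lemma nonfan {x z : V} (F : Fan G C φ u n) (hx : x ≠ u) (hz : z ≠ u) {i : ℕ} :
    s(x, z) ≠ s(u, F.v i) := by
  intro h
  rcases Sym2.eq_iff.mp h with ⟨h1, _⟩ | ⟨_, h2⟩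
  · exact hx h1
  · exact hz h2

lemma edge_mem (F : Fan G C φ u n) {m : ℕ} (hm : m ≤ n) :
    s(u, F.v m) ∈ {e : Sym2 V | φ e ≠ none} ∪ {s(u, F.v 0)} := by
  cases m with
  | zero => right; rfl
  | succ k =>
    left
    have := F.hedge k (by omega)
    simp only [Set.mem_setOf_eq, this]
    simp

end Fan

/-- Rotating the fan: shift colors down, edge `s(u, v m)` becomes uncolored. -/
noncomputable def rot (φ : Sym2 V → Option ℕ) (u : V) (v : ℕ → V) : ℕ → Sym2 V → Option ℕ
  | 0 => φ
  | m + 1 =>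
    Function.update (Function.update (rot φ u v m) s(u, v (m+1)) none)
      s(u, v m) (φ s(u, v (m+1)))

section RotLemmas

variable {G : SimpleGraph V} {C : Set ℕ} {φ : Sym2 V → Option ℕ} {u : V} {n : ℕ}
  (F : Fan G C φ u n)

lemma rot_spec {m : ℕ} (hm : m ≤ n) :
    (∀ e, (∀ i, i ≤ m → e ≠ s(u, F.v i)) → rot φ u F.v m e = φ e) ∧
    (∀ i, i < m → rot φ u F.v m s(u, F.v i) = φ s(u, F.v (i+1))) ∧
    rot φ u F.v m s(u, F.v m) = none := by
  induction m with
  | zero =>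
    refine ⟨fun e _ => rfl, fun i hi => absurd hi (by omega), F.hnone0⟩
  | succ m ih =>
    obtain ⟨ih1, ih2, ih3⟩ := ih (by omega)
    refine ⟨?_, ?_, ?_⟩
    · intro e he
      unfold rot
      rw [Function.update_of_ne (he m (by omega)),
        Function.update_of_ne (he (m+1) le_rfl)]
      exact ih1 e fun i hi => he i (by omega)
    · intro i hi
      unfold rot
      rcases Nat.lt_succ_iff_lt_or_eq.mp hi with hi' | rfl
      · rw [Function.update_of_ne (F.edge_ne (by omega) (by omega) (by omega)),
          Function.update_of_ne (F.edge_ne (by omega) (by omega) (by omega))]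
        exact ih2 i hi'
      · rw [Function.update_self]
    · unfold rot
      rw [Function.update_of_ne (F.edge_ne (by omega) (by omega) (by omega)),
        Function.update_self]

lemma rot_nonfan {m : ℕ} (hm : m ≤ n) {e : Sym2 V}
    (he : ∀ i, i ≤ m → e ≠ s(u, F.v i)) : rot φ u F.v m e = φ e :=
  (rot_spec F hm).1 e he

lemma rot_lt {m i : ℕ} (hm : m ≤ n) (hi : i < m) :
    rot φ u F.v m s(u, F.v i) = φ s(u, F.v (i+1)) :=
  (rot_spec F hm).2.1 i hi

lemma rot_self {m : ℕ} (hm : m ≤ n) : rot φ u F.v m s(u, F.v m) = none :=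
  (rot_spec F hm).2.2

lemma rot_gt {m i : ℕ} (hm : m ≤ n) (hi : m < i) (hin : i ≤ n) :
    rot φ u F.v m s(u, F.v i) = φ s(u, F.v i) :=
  rot_nonfan F hm fun l hl => F.edge_ne hin (by omega) (by omega)

/-- Any color on a `u`-edge of the rotated coloring is on a `u`-edge of `φ`. -/
lemma rot_palette {m : ℕ} (hm : m ≤ n) {z : V} {d : ℕ}
    (h : rot φ u F.v m s(u, z) = some d) : ∃ z', φ s(u, z') = some d := by
  by_cases hfan : ∃ i, i ≤ n ∧ s(u, z) = s(u, F.v i)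
  · obtain ⟨i, hin, hei⟩ := hfan
    rw [hei] at h
    rcases lt_trichotomy i m with hi | rfl | hi
    · rw [rot_lt F hm hi] at h
      exact ⟨F.v (i+1), h⟩
    · rw [rot_self F hm] at h
      exact absurd h (by simp)
    · rw [rot_gt F hm hi hin] at h
      exact ⟨F.v i, h⟩
  · push_neg at hfan
    rw [rot_nonfan F hm (fun i hi => hfan i (by omega))] at h
    exact ⟨z, h⟩

lemma rot_proper (hφ : IsProperPartialEC G C φ) {m : ℕ} (hm : m ≤ n) :
    IsProperPartialEC G C (rot φ u F.v m) ∧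
    {e : Sym2 V | rot φ u F.v m e ≠ none}
      = ({e : Sym2 V | φ e ≠ none} ∪ {s(u, F.v 0)}) \ {s(u, F.v m)} := by
  induction m with
  | zero =>
    refine ⟨hφ, ?_⟩
    ext e
    simp only [rot, Set.mem_setOf_eq, Set.mem_diff, Set.mem_union, Set.mem_singleton_iff]
    constructor
    · intro h; exact ⟨Or.inl h, fun he => h (by rw [he]; exact F.hnone0)⟩
    · rintro ⟨h | h, h2⟩
      · exact h
      · exact absurd h h2
  | succ m ih =>
    obtain ⟨ihp, ihs⟩ := ih (by omega)
    have hβm := F.hedge m (by omega)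
    set ψ₁ := Function.update (rot φ u F.v m) s(u, F.v (m+1)) none with hψ₁
    have hψ₁p : IsProperPartialEC G C ψ₁ := uncolor_proper ihp _
    have hemem1 : s(u, F.v m) ≠ s(u, F.v (m+1)) := F.edge_ne (by omega) (by omega) (by omega)
    have hψ₁none : ψ₁ s(u, F.v m) = none := by
      rw [hψ₁, Function.update_of_ne hemem1]
      exact rot_self F (by omega)
    have hub : ∀ y, ψ₁ s(u, y) ≠ some (F.β m) := by
      intro y hcon
      have h1 : s(u, y) ≠ s(u, F.v (m+1)) := by
        intro heq
        rw [hψ₁, heq, Function.update_self] at hcon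
        exact absurd hcon (by simp)
      rw [hψ₁, Function.update_of_ne h1] at hcon
      by_cases hfan : ∃ i, i ≤ n ∧ s(u, y) = s(u, F.v i)
      · obtain ⟨i, hin, hei⟩ := hfan
        rw [hei] at hcon
        rcases lt_trichotomy i m with hi | rfl | hi
        · rw [rot_lt F (by omega) hi, F.hedge i (by omega)] at hcon
          have : i = m := F.hβinj i (by omega) m (by omega) (Option.some_inj.mp hcon)
          omega
        · rw [rot_self F (by omega)] at hcon
          exact absurd hcon (by simp)
        · obtain ⟨k, rfl⟩ : ∃ k, i = k + 1 := ⟨i - 1, by omega⟩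
          rw [rot_gt F (by omega) hi hin, F.hedge k (by omega)] at hcon
          have : k = m := F.hβinj k (by omega) m (by omega) (Option.some_inj.mp hcon)
          subst this
          exact h1 hei
      · push_neg at hfan
        rw [rot_nonfan F (by omega) (fun i hi => hfan i (by omega))] at hcon
        have hyne : y ≠ F.v (m+1) := by
          intro heq
          exact hfan (m+1) (by omega) (by rw [heq])
        exact anchored hφ hyne hcon hβm
    have hvb : ∀ y, ψ₁ s(F.v m, y) ≠ some (F.β m) := by
      intro y hcon
      by_cases hyu : y = u
      · subst hyu
        rw [Sym2.eq_swap] at hcon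
        rw [hψ₁none] at hcon
        exact absurd hcon (by simp)
      · have hnf : ∀ i, s(F.v m, y) ≠ s(u, F.v i) :=
          fun i => F.nonfan (F.une (by omega)).symm hyu
        rw [hψ₁, Function.update_of_ne (hnf (m+1)),
          rot_nonfan F (by omega) (fun i _ => hnf i)] at hcon
        exact F.hmiss m (by omega) y hcon
    have hext := extend_one hψ₁p ((SimpleGraph.mem_edgeSet G).mpr (F.hadj m (by omega)))
      hψ₁none (F.hβC m (by omega)) hub hvb
    have hrw : rot φ u F.v (m+1) = Function.update ψ₁ s(u, F.v m) (some (F.β m)) := by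
      show Function.update (Function.update (rot φ u F.v m) s(u, F.v (m+1)) none)
        s(u, F.v m) (φ s(u, F.v (m+1))) = _
      rw [hβm, hψ₁]
    constructor
    · rw [hrw]; exact hext.1
    · rw [hrw, hext.2]
      have hψ₁s : {e : Sym2 V | ψ₁ e ≠ none}
          = {e : Sym2 V | rot φ u F.v m e ≠ none} \ {s(u, F.v (m+1))} := by
        ext e
        by_cases h : e = s(u, F.v (m+1))
        · subst h; simp [hψ₁]
        · simp only [Set.mem_setOf_eq, Set.mem_diff, Set.mem_singleton_iff, hψ₁,
            Function.update_of_ne h]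
          tauto
      rw [hψ₁s, ihs]
      ext x
      simp only [Set.mem_insert_iff, Set.mem_diff, Set.mem_union, Set.mem_singleton_iff,
        Set.mem_setOf_eq]
      constructor
      · rintro (rfl | ⟨⟨hx1, _⟩, hx3⟩)
        · exact ⟨F.edge_mem (by omega), hemem1⟩
        · exact ⟨hx1, hx3⟩
      · rintro ⟨hx1, hx2⟩
        by_cases hxm : x = s(u, F.v m)
        · exact Or.inl hxm
        · exact Or.inr ⟨⟨hx1, hxm⟩, hx2⟩

end RotLemmas

lemma set_step {X : Type*} {A : Set X} {a b : X} (h : b ∈ A ∪ {a}) :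
    insert b ((A ∪ {a}) \ {b}) = insert a A := by
  rw [Set.insert_diff_singleton, Set.insert_eq_self.mpr h, Set.union_singleton]

lemma fan_le_deg [Fintype V] {G : SimpleGraph V} [DecidableRel G.Adj] {C : Set ℕ}
    {φ : Sym2 V → Option ℕ} {u : V} {n : ℕ} (F : Fan G C φ u n) : n ≤ G.degree u := by
  rw [← SimpleGraph.card_neighborFinset_eq_degree, ← Finset.card_range n]
  apply Finset.card_le_card_of_injOn (fun i => F.v (i+1))
  · intro i hi
    rw [Finset.mem_coe, Finset.mem_range] at hi
    rw [Finset.mem_coe, SimpleGraph.mem_neighborFinset]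
    exact F.hadj (i+1) (by omega)
  · intro i hi j hj hij
    simp only [Finset.coe_range, Set.mem_Iio] at hi hj
    have := F.hvinj (i+1) (by omega) (j+1) (by omega) hij
    omega

/-! ### Extending a fan -/

lemma Fan.extend {G : SimpleGraph V} {C : Set ℕ} {φ : Sym2 V → Option ℕ} {u : V} {n : ℕ}
    (F : Fan G C φ u n) {y : V} {c : ℕ}
    (hadjy : G.Adj u y) (hy : φ s(u, y) = some c) (hcC : c ∈ C)
    (hcmiss : ∀ z, φ s(F.v n, z) ≠ some c)
    (hynotv : ∀ j, j ≤ n → y ≠ F.v j)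
    (hcnew : ∀ j, j < n → F.β j ≠ c) :
    ∃ F' : Fan G C φ u (n+1), F'.v 0 = F.v 0 := by
  refine ⟨⟨fun i => if i = n+1 then y else F.v i, fun i => if i = n then c else F.β i,
    ?_, ?_, ?_, ?_, ?_, ?_, ?_⟩, ?_⟩
  · intro i hi
    split_ifs with h
    · exact hadjy
    · exact F.hadj i (by omega)
  · intro i hi j hj heq
    by_cases h1 : i = n+1 <;> by_cases h2 : j = n+1
    · omega
    · rw [if_pos h1, if_neg h2] at heq
      exact absurd heq (hynotv j (by omega))
    · rw [if_neg h1, if_pos h2] at heq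
      exact absurd heq.symm (hynotv i (by omega))
    · rw [if_neg h1, if_neg h2] at heq
      exact F.hvinj i (by omega) j (by omega) heq
  · rw [if_neg (by omega : ¬ (0:ℕ) = n+1)]
    exact F.hnone0
  · intro i hi
    by_cases h : i = n
    · subst h
      rw [if_pos rfl, if_pos rfl]
      exact hy
    · rw [if_neg (by omega : ¬ i+1 = n+1), if_neg h]
      exact F.hedge i (by omega)
  · intro i hi z
    by_cases h : i = n
    · subst h
      rw [if_neg (by omega : ¬ i = i+1), if_pos rfl]
      exact hcmiss z
    · rw [if_neg (by omega : ¬ i = n+1), if_neg h]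
      exact F.hmiss i (by omega) z
  · intro i hi
    split_ifs with h
    · exact hcC
    · exact F.hβC i (by omega)
  · intro i hi j hj heq
    by_cases h1 : i = n <;> by_cases h2 : j = n
    · omega
    · rw [if_pos h1, if_neg h2] at heq
      exact absurd heq.symm (hcnew j (by omega))
    · rw [if_neg h1, if_pos h2] at heq
      exact absurd heq (hcnew i (by omega))
    · rw [if_neg h1, if_neg h2] at heq
      exact F.hβinj i (by omega) j (by omega) heq
  · dsimp only
    rw [if_neg (by omega : ¬ (0:ℕ) = n+1)]

/-- Rotating to `j < n` does not change the `(α, β j)`-Kempe relation. -/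
lemma rot_kempe_eq {G : SimpleGraph V} {C : Set ℕ} {φ : Sym2 V → Option ℕ} {u : V} {n : ℕ}
    (F : Fan G C φ u n) {α : ℕ} (hα : ∀ z, φ s(u, z) ≠ some α) {j : ℕ} (hj : j < n) :
    ∀ x z, kempeRel (rot φ u F.v j) α (F.β j) x z ↔ kempeRel φ α (F.β j) x z := by
  intro x z
  by_cases hfan : ∃ i, i ≤ j ∧ s(x, z) = s(u, F.v i)
  · obtain ⟨i, hij, hei⟩ := hfan
    have hφf : ¬ kempeRel φ α (F.β j) x z := by
      intro h
      unfold kempeRel at h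
      rw [hei] at h
      rcases h with h | h
      · exact hα (F.v i) h
      · cases i with
        | zero => rw [F.hnone0] at h; exact absurd h (by simp)
        | succ k =>
          rw [F.hedge k (by omega)] at h
          have := F.hβinj k (by omega) j hj (Option.some_inj.mp h)
          omega
    have hψf : ¬ kempeRel (rot φ u F.v j) α (F.β j) x z := by
      intro h
      unfold kempeRel at h
      rw [hei] at h
      rcases lt_or_eq_of_le hij with hij' | rfl
      · rw [rot_lt F (by omega) hij'] at h
        rcases h with h | h
        · exact hα (F.v (i+1)) h
        · rw [F.hedge i (by omega)] at h
          have := F.hβinj i (by omega) j hj (Option.some_inj.mp h)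
          omega
      · rw [rot_self F (by omega)] at h
        rcases h with h | h <;> exact absurd h (by simp)
    exact iff_of_false hψf hφf
  · push_neg at hfan
    unfold kempeRel
    rw [rot_nonfan F (by omega) (fun i hi => hfan i hi)]

/-! ### The master induction -/

lemma fan_master [Fintype V] {G : SimpleGraph V} [DecidableRel G.Adj] {Δ : ℕ}
    (hΔ : ∀ x : V, G.degree x ≤ Δ) {φ : Sym2 V → Option ℕ}
    (hφ : IsProperPartialEC G (Set.Icc 1 (Δ + 1)) φ) (u : V) {α : ℕ}
    (hαC : α ∈ Set.Icc 1 (Δ + 1)) (hα : ∀ z, φ s(u, z) ≠ some α) :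
    ∀ fuel n : ℕ, n + fuel = Δ + 1 → ∀ F : Fan G (Set.Icc 1 (Δ + 1)) φ u n,
      ∃ φ' : Sym2 V → Option ℕ, IsProperPartialEC G (Set.Icc 1 (Δ + 1)) φ' ∧
        {e : Sym2 V | φ' e ≠ none} = insert s(u, F.v 0) {e : Sym2 V | φ e ≠ none} := by
  intro fuel
  induction fuel with
  | zero =>
    intro n hn F
    have h1 : n ≤ Δ := le_trans (fan_le_deg F) (hΔ u)
    exact absurd hn (by omega)
  | succ fuel ih =>
    intro n hn F
    obtain ⟨c, hcC, hcmiss⟩ := missing_exists hφ (F.v n) (hΔ _)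
    by_cases hcu : ∀ z, φ s(u, z) ≠ some c
    · -- terminal: rotate fully and color s(u, v n) with c
      obtain ⟨hψp, hψs⟩ := rot_proper F hφ (le_refl n)
      have h1 : rot φ u F.v n s(u, F.v n) = none := rot_self F le_rfl
      have h2 : ∀ z, rot φ u F.v n s(u, z) ≠ some c := by
        intro z hcon
        obtain ⟨z', hz'⟩ := rot_palette F le_rfl hcon
        exact hcu z' hz'
      have h3 : ∀ z, rot φ u F.v n s(F.v n, z) ≠ some c := by
        intro z hcon
        by_cases hzu : z = u
        · subst hzu; rw [Sym2.eq_swap, h1] at hcon; exact absurd hcon (by simp)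
        · rw [rot_nonfan F le_rfl (fun i _ => F.nonfan (F.une le_rfl).symm hzu)] at hcon
          exact hcmiss z hcon
      obtain ⟨hp', hs'⟩ := extend_one hψp ((SimpleGraph.mem_edgeSet G).mpr (F.hadj n le_rfl))
        h1 hcC h2 h3
      refine ⟨_, hp', ?_⟩
      rw [hs', hψs, set_step (F.edge_mem le_rfl)]
    · push_neg at hcu
      obtain ⟨y, hy⟩ := hcu
      have hαc : α ≠ c := fun h => hα y (by rw [h]; exact hy)
      by_cases hcnew : ∀ j, j < n → F.β j ≠ c
      · -- extend the fan
        have hyadj : G.Adj u y := (SimpleGraph.mem_edgeSet G).mp (hφ.1 _ (by rw [hy]; simp))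
        have hynotv : ∀ j, j ≤ n → y ≠ F.v j := by
          intro j hjn heq
          cases j with
          | zero =>
            rw [heq, F.hnone0] at hy
            exact absurd hy (by simp)
          | succ k =>
            rw [heq, F.hedge k (by omega)] at hy
            exact hcnew k (by omega) (Option.some_inj.mp hy)
        obtain ⟨F', hF'0⟩ := F.extend hyadj hy hcC hcmiss hynotv hcnew
        obtain ⟨φ', hp', hs'⟩ := ih (n+1) (by omega) F'
        rw [hF'0] at hs'
        exact ⟨φ', hp', hs'⟩
      · push_neg at hcnew
        obtain ⟨j, hj, hβjc⟩ := hcnew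
        have hcmissj : ∀ z, φ s(F.v j, z) ≠ some c := by
          intro z
          rw [← hβjc]
          exact F.hmiss j hj z
        by_cases hreach : Relation.ReflTransGen (kempeRel φ α c) u (F.v j)
        · -- CASE B : v j is in u's Kempe chain; rotate fully, swap the chain of v j
          obtain ⟨hψp, hψs⟩ := rot_proper F hφ (le_refl n)
          have hedgej1 : φ s(u, F.v (j+1)) = some c := by rw [F.hedge j hj, hβjc]
          set R' : V → V → Prop :=
            fun a b => kempeRel φ α c a b ∧ s(a, b) ≠ s(u, F.v (j+1)) with hR'
          set T := {x : V | Relation.ReflTransGen R' (F.v j) x} with hT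
          set S := insert u T with hSdef
          have huS : u ∈ S := Set.mem_insert u T
          have hvjT : F.v j ∈ T := Relation.ReflTransGen.refl
          have hS : ∀ x ∈ S, ∀ z, (rot φ u F.v n s(x, z) = some α ∨
              rot φ u F.v n s(x, z) = some c) → z ∈ S := by
            intro x hx z h
            by_cases hzu : z = u
            · subst hzu; exact huS
            by_cases hxu : x = u
            · subst hxu
              by_cases hfan : ∃ i, i ≤ n ∧ s(x, z) = s(x, F.v i)
              · obtain ⟨i, hin, hei⟩ := hfan
                rw [hei] at h
                rcases lt_or_eq_of_le hin with hi' | rfl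
                · rw [rot_lt F le_rfl hi'] at h
                  rcases h with h | h
                  · exact absurd h (hα (F.v (i+1)))
                  · rw [F.hedge i (by omega)] at h
                    have hij2 : i = j := F.hβinj i (by omega) j hj
                      (by rw [← hβjc] at h; exact Option.some_inj.mp h)
                    subst hij2
                    have hzvi : z = F.v i := Sym2.congr_right.mp hei
                    rw [hzvi]
                    exact Set.mem_insert_of_mem x hvjT
                · rw [rot_self F le_rfl] at h
                  rcases h with h | h <;> exact absurd h (by simp)
              · push_neg at hfan
                rw [rot_nonfan F le_rfl (fun i hi => hfan i (by omega))] at h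
                rcases h with h | h
                · exact absurd h (hα z)
                · have hz2 : z = F.v (j+1) := by
                    by_contra hne
                    exact anchored hφ hne h hedgej1
                  exact absurd (by rw [hz2]) (hfan (j+1) (by omega))
            · have hxT : x ∈ T := by
                rcases Set.mem_insert_iff.mp hx with h' | h'
                · exact absurd h' hxu
                · exact h'
              have hxT' : Relation.ReflTransGen R' (F.v j) x := hxT
              have hnf : ∀ i, s(x, z) ≠ s(u, F.v i) := fun i => F.nonfan hxu hzu
              rw [rot_nonfan F le_rfl (fun i _ => hnf i)] at h
              exact Set.mem_insert_of_mem u (hxT'.tail ⟨h, hnf (j+1)⟩)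
          have hvnS : F.v n ∉ S := by
            intro hmem
            rcases Set.mem_insert_iff.mp hmem with heq | hT2
            · exact F.une le_rfl heq.symm
            · have hT2' : Relation.ReflTransGen R' (F.v j) (F.v n) := hT2
              have hr1 : Relation.ReflTransGen (kempeRel φ α c) (F.v j) (F.v n) :=
                Relation.ReflTransGen.mono (r := R') (fun a b (hab : R' a b) => hab.1) _ _ hT2'
              have hvjn : F.v j ≠ F.v n := fun h => by
                have := F.hvinj j (by omega) n le_rfl h; omega
              exact three_ends hφ (F.une (by omega)) (F.une le_rfl) hvjn
                hα hcmissj hcmiss hreach (hreach.trans hr1)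
          obtain ⟨hsp, hss⟩ := swap_proper hψp hαC hcC hS
          have h1 : swapOn (rot φ u F.v n) α c S s(u, F.v n) = none := by
            rw [swapOn_none_iff]; exact rot_self F le_rfl
          have h2 : ∀ z, swapOn (rot φ u F.v n) α c S s(u, z) ≠ some c := by
            intro z hcon
            rw [swapOn_mem huS] at hcon
            cases hψz : rot φ u F.v n s(u, z) with
            | none => rw [hψz] at hcon; exact absurd hcon (by simp)
            | some d =>
              rw [hψz] at hcon
              simp only [Option.map_some] at hcon
              have hd : d = α := tau_eq_c (Option.some_inj.mp hcon)
              subst hd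
              obtain ⟨z', hz'⟩ := rot_palette F le_rfl hψz
              exact hα z' hz'
          have h3 : ∀ z, swapOn (rot φ u F.v n) α c S s(F.v n, z) ≠ some c := by
            intro z hcon
            rw [swapOn_not_mem hS hvnS] at hcon
            by_cases hzu : z = u
            · subst hzu
              rw [Sym2.eq_swap, rot_self F le_rfl] at hcon
              exact absurd hcon (by simp)
            · rw [rot_nonfan F le_rfl (fun i _ => F.nonfan (F.une le_rfl).symm hzu)] at hcon
              exact hcmiss z hcon
          obtain ⟨hp', hs'⟩ := extend_one hsp
            ((SimpleGraph.mem_edgeSet G).mpr (F.hadj n le_rfl)) h1 hcC h2 h3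
          refine ⟨_, hp', ?_⟩
          rw [hs', hss, hψs, set_step (F.edge_mem le_rfl)]
        · -- CASE A : v j is not in u's Kempe chain; rotate to j, swap u's chain
          obtain ⟨hψp, hψs⟩ := rot_proper F hφ (le_of_lt hj)
          have hiff := rot_kempe_eq F hα hj
          rw [hβjc] at hiff
          set S := {x : V | Relation.ReflTransGen (kempeRel (rot φ u F.v j) α c) u x}
            with hSdef
          have huS : u ∈ S := Relation.ReflTransGen.refl
          have hS : ∀ x ∈ S, ∀ z, (rot φ u F.v j s(x, z) = some α ∨
              rot φ u F.v j s(x, z) = some c) → z ∈ S := by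
            intro x hx z h
            have hx' : Relation.ReflTransGen (kempeRel (rot φ u F.v j) α c) u x := hx
            exact hx'.tail h
          have hvjS : F.v j ∉ S := fun h =>
            hreach (Relation.ReflTransGen.mono (fun a b hab => (hiff a b).mp hab) _ _ h)
          obtain ⟨hsp, hss⟩ := swap_proper hψp hαC hcC hS
          have h1 : swapOn (rot φ u F.v j) α c S s(u, F.v j) = none := by
            rw [swapOn_none_iff]; exact rot_self F (le_of_lt hj)
          have h2 : ∀ z, swapOn (rot φ u F.v j) α c S s(u, z) ≠ some c := by
            intro z hcon
            rw [swapOn_mem huS] at hcon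
            cases hψz : rot φ u F.v j s(u, z) with
            | none => rw [hψz] at hcon; exact absurd hcon (by simp)
            | some d =>
              rw [hψz] at hcon
              simp only [Option.map_some] at hcon
              have hd : d = α := tau_eq_c (Option.some_inj.mp hcon)
              subst hd
              obtain ⟨z', hz'⟩ := rot_palette F (le_of_lt hj) hψz
              exact hα z' hz'
          have h3 : ∀ z, swapOn (rot φ u F.v j) α c S s(F.v j, z) ≠ some c := by
            intro z hcon
            rw [swapOn_not_mem hS hvjS] at hcon
            by_cases hzu : z = u
            · subst hzu
              rw [Sym2.eq_swap, rot_self F (le_of_lt hj)] at hcon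
              exact absurd hcon (by simp)
            · rw [rot_nonfan F (le_of_lt hj)
                (fun i _ => F.nonfan (F.une (le_of_lt hj)).symm hzu)] at hcon
              exact hcmissj z hcon
          obtain ⟨hp', hs'⟩ := extend_one hsp
            ((SimpleGraph.mem_edgeSet G).mpr (F.hadj j (le_of_lt hj))) h1 hcC h2 h3
          refine ⟨_, hp', ?_⟩
          rw [hs', hss, hψs, set_step (F.edge_mem (le_of_lt hj))]

end VizingAux

/-- **Fan-repair extension lemma.** If `G` has maximum degree at most `Δ`, any proper
partial edge coloring with color set `{1, …, Δ+1}` can be modified so that one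
additional prescribed uncolored edge becomes colored, while all previously colored
edges remain colored (and no others). -/
theorem extend_partial_coloring {V : Type*} [Fintype V] [DecidableEq V]
    (G : SimpleGraph V) [DecidableRel G.Adj] (Δ : ℕ)
    (hΔ : ∀ v : V, G.degree v ≤ Δ)
    (φ : Sym2 V → Option ℕ)
    (hφ : IsProperPartialEC G (Set.Icc 1 (Δ + 1)) φ)
    (u v : V) (huv : G.Adj u v) (hun : φ s(u, v) = none) :
    ∃ φ' : Sym2 V → Option ℕ,
      IsProperPartialEC G (Set.Icc 1 (Δ + 1)) φ' ∧
      {e : Sym2 V | φ' e ≠ none} = insert s(u, v) {e : Sym2 V | φ e ≠ none} := by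
  obtain ⟨α, hαC, hα⟩ := VizingAux.missing_exists hφ u (hΔ u)
  obtain ⟨φ', h1, h2⟩ := VizingAux.fan_master hΔ hφ u hαC hα (Δ + 1) 0 (by omega)
    ⟨fun _ => v, fun _ => 0, fun _ _ => huv, fun i _ j _ _ => by omega, hun,
      fun i hi => absurd hi (by omega), fun i hi => absurd hi (by omega),
      fun i hi => absurd hi (by omega), fun i hi => absurd hi (by omega)⟩
  exact ⟨φ', h1, h2⟩
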